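/- Let A be an m×m real symmetric positive semidefinite matrix with Moore–Penrose inverse A†, let α be a real scalar, and define the Newton–Raphson iterates A₀ = α A, A_{k+1} = 2 A_k − A_k A A_k. Then for every k ≥ 0 the spectral norm satisfies the quadratic contraction ‖A A† − A A_{k+1}‖ ≤ ‖A A† − A A_k‖². -/

import Mathlib

open Matrix Filter

/-- The spectral norm (ℓ²-operator norm) of a real square matrix. -/
noncomputable def specNorm {m : ℕ} (M : Matrix (Fin m) (Fin m) ℝ) : ℝ :=
  ‖Matrix.toEuclideanCLM (𝕜 := ℝ) M‖

/-- `Ad` is the Moore–Penrose inverse of `A`: the Penrose equations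
`A Ad A = A`, `Ad A Ad = Ad`, `(A Ad)ᵀ = A Ad`, `(Ad A)ᵀ = Ad A`. -/
def IsMoorePenroseInv {m n : ℕ} (A : Matrix (Fin m) (Fin n) ℝ)
    (Ad : Matrix (Fin n) (Fin m) ℝ) : Prop :=
  A * Ad * A = A ∧ Ad * A * Ad = Ad ∧ (A * Ad)ᵀ = A * Ad ∧ (Ad * A)ᵀ = Ad * A

/-- In spectral norm, the quadratic contraction
`‖A Ad - A N_{k+1}‖ ≤ ‖A Ad - A N_k‖²` holds. -/
theorem newton_raphson_quadratic_contraction {m : ℕ}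
    (A Ad : Matrix (Fin m) (Fin m) ℝ)
    (hA : A.PosSemidef)
    (hMP : IsMoorePenroseInv A Ad)
    (α : ℝ) (N : ℕ → Matrix (Fin m) (Fin m) ℝ)
    (hN0 : N 0 = α • A)
    (hNrec : ∀ k, N (k + 1) = (2 : ℝ) • N k - N k * A * N k) :
    ∀ k, specNorm (A * Ad - A * N (k + 1)) ≤ specNorm (A * Ad - A * N k) ^ 2 := by
  have hAT : Aᵀ = A := by
    have := hA.1
    rwa [Matrix.IsHermitian, Matrix.conjTranspose_eq_transpose_of_trivial] at this
  have hPA : (A * Ad) * A = A := hMP.1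
  have hAP : A * (A * Ad) = A := by
    have : ((A * Ad) * A)ᵀ = Aᵀ := by rw [hPA]
    rw [Matrix.transpose_mul, hMP.2.2.1, hAT] at this
    exact this
  have hPP : (A * Ad) * (A * Ad) = A * Ad := by
    rw [← Matrix.mul_assoc, hMP.1]
  -- invariant: N k * (A * Ad) = N k
  have hinv : ∀ k, N k * (A * Ad) = N k := by
    intro k
    induction k with
    | zero =>
      rw [hN0, Matrix.smul_mul, ← Matrix.mul_assoc, Matrix.mul_assoc, hAP]
    | succ k ih =>
      rw [hNrec k, Matrix.sub_mul, Matrix.smul_mul, ih]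
      congr 1
      rw [Matrix.mul_assoc (N k * A), ih]
  intro k
  have key : A * Ad - A * N (k + 1) = (A * Ad - A * N k) * (A * Ad - A * N k) := by
    have h1 : (A * Ad) * (A * N k) = A * N k := by
      rw [← Matrix.mul_assoc, hMP.1]
    have h2 : (A * N k) * (A * Ad) = A * N k := by
      rw [Matrix.mul_assoc, hinv k]
    have h3 : (A * N k) * (A * N k) = A * (N k * A * N k) := by
      simp only [Matrix.mul_assoc]
    rw [hNrec k, Matrix.mul_sub, Matrix.mul_smul, Matrix.sub_mul, Matrix.mul_sub,
      Matrix.mul_sub, hPP, h1, h2, h3]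
    module
  rw [key, specNorm, specNorm, _root_.map_mul, sq]
  exact norm_mul_le _ _
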